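/- For μ = (b+ic, v) ∈ ℂ×ℤ, there exist integers p, q with g^μ = g^p·conj(g)^q for all g ∈ ℂ* if and only if c = 0 and b is an integer congruent to v modulo 2; in that case g^μ = g^((b+v)/2)·conj(g)^((b-v)/2). -/

import Mathlib

noncomputable section

open Complex Finset

/-- `g^μ` for `μ = (b + c·i, v) ∈ ℂ × ℤ`: `|g|^(b+ci) · (g/|g|)^v`. -/
noncomputable def cpw (b c : ℝ) (v : ℤ) (g : ℂ) : ℂ :=
  ((‖g‖ : ℂ) ^ ((b : ℂ) + (c : ℂ) * Complex.I)) * (g / (‖g‖ : ℂ)) ^ v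

/-- `g^μ` where `μ` is encoded as a triple `(b, c, v) : ℝ × ℝ × ℤ`. -/
noncomputable def cpwT (t : ℝ × ℝ × ℤ) (g : ℂ) : ℂ := cpw t.1 t.2.1 t.2.2 g

/-- The product `μ₂μ₁ = (b₁b₂, b₁c₂ + c₁v₂, v₁v₂)` in the ring `𝓡 ≅ ℂ × ℤ`. -/
def rmul (μ₂ μ₁ : ℝ × ℝ × ℤ) : ℝ × ℝ × ℤ :=
  (μ₁.1 * μ₂.1, μ₁.1 * μ₂.2.1 + μ₁.2.1 * (μ₂.2.2 : ℝ), μ₁.2.2 * μ₂.2.2)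

/-- The identity element of `𝓡`. -/
def rone : ℝ × ℝ × ℤ := (1, 0, 1)

/-- `⟨α, β⟩ = Σₖ αᵏ βᵏ ∈ 𝓡`. -/
def rinner {n : ℕ} (α β : Fin n → ℝ × ℝ × ℤ) : ℝ × ℝ × ℤ :=
  ∑ k, rmul (α k) (β k)

/-- `χ^α(g₁, …, gₙ) = ∏ₖ gₖ^{αᵏ}`. -/
noncomputable def chi {n : ℕ} (α : Fin n → ℝ × ℝ × ℤ) (g : Fin n → ℂ) : ℂ :=
  ∏ k, cpwT (α k) (g k)

lemma cpw_real_pos (b c : ℝ) (v : ℤ) {t : ℝ} (ht : 0 < t) :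
    cpw b c v (t : ℂ) = (t : ℂ) ^ ((b : ℂ) + (c : ℂ) * Complex.I) := by
  unfold cpw
  rw [Complex.norm_real, Real.norm_eq_abs, abs_of_pos ht, div_self (by exact_mod_cast ht.ne'), one_zpow, mul_one]

lemma part2 (k v : ℤ) (hdvd : (2:ℤ) ∣ (k - v)) (g : ℂ) (hg : g ≠ 0) :
    cpw (k : ℝ) 0 v g = g ^ ((k + v) / 2) * ((starRingEnd ℂ) g) ^ ((k - v) / 2) := by
  obtain ⟨m, hm⟩ := hdvd
  set r : ℝ := ‖g‖ with hr
  have hr0 : (0:ℝ) < r := norm_pos_iff.mpr hg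
  have hrc : (r : ℂ) ≠ 0 := by exact_mod_cast hr0.ne'
  set u : ℂ := g / r with hu
  have hu0 : u ≠ 0 := div_ne_zero hg hrc
  have hgu : g = r * u := by rw [hu, mul_div_cancel₀ _ hrc]
  have huabs : ‖u‖ = 1 := by
    rw [hu, norm_div, Complex.norm_real, Real.norm_eq_abs, hr, abs_of_pos (hr ▸ hr0), div_self hr0.ne']
  have hconj : (starRingEnd ℂ) u = u⁻¹ := by
    refine eq_inv_of_mul_eq_one_left ?_
    rw [mul_comm, Complex.mul_conj, Complex.normSq_eq_norm_sq, huabs]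
    norm_num
  have lhs : cpw (k : ℝ) 0 v g = (r : ℂ) ^ k * u ^ v := by
    unfold cpw
    rw [← hr, ← hu]
    congr 1
    rw [show ((k:ℝ):ℂ) + ((0:ℝ):ℂ) * Complex.I = ((k:ℤ):ℂ) by push_cast; ring,
      Complex.cpow_intCast]
  rw [lhs, hgu, map_mul, mul_zpow, mul_zpow, Complex.conj_ofReal, hconj, inv_zpow,
    ← zpow_neg, mul_mul_mul_comm, ← zpow_add₀ hrc, ← zpow_add₀ hu0,
    show (k+v)/2 + (k-v)/2 = k by omega, show (k+v)/2 + -((k-v)/2) = v by omega]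


/-- `g^μ = g^p · conj(g)^q` for some integers `p, q` and all `g ∈ ℂ*` iff
`c = 0` and `b` is an integer congruent to `v` mod `2`; in that case
`g^μ = g^((b+v)/2) · conj(g)^((b-v)/2)`. -/
theorem cpw_eq_pow_mul_conj_pow_iff (b c : ℝ) (v : ℤ) :
    ((∃ p q : ℤ, ∀ g : ℂ, g ≠ 0 → cpw b c v g = g ^ p * ((starRingEnd ℂ) g) ^ q) ↔
      (c = 0 ∧ ∃ k : ℤ, (b : ℝ) = (k : ℝ) ∧ (2 : ℤ) ∣ (k - v))) ∧
    (∀ k : ℤ, c = 0 → (b : ℝ) = (k : ℝ) → (2 : ℤ) ∣ (k - v) →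
      ∀ g : ℂ, g ≠ 0 →
        cpw b c v g = g ^ ((k + v) / 2) * ((starRingEnd ℂ) g) ^ ((k - v) / 2)) := by
  constructor
  · constructor
    · rintro ⟨p, q, hpq⟩
      have key : ∀ t : ℝ, 0 < t →
          Complex.exp ((Real.log t : ℂ) * ((b : ℂ) + (c : ℂ) * Complex.I)) =
          Complex.exp ((Real.log t : ℂ) * (((p + q : ℤ)) : ℂ)) := by
        intro t ht
        have h := hpq (t : ℂ) (by exact_mod_cast ht.ne')
        rw [cpw_real_pos b c v ht] at h
        have htc : (t : ℂ) ≠ 0 := by exact_mod_cast ht.ne'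
        rw [Complex.conj_ofReal, ← zpow_add₀ htc, ← Complex.cpow_intCast] at h
        rw [Complex.cpow_def_of_ne_zero htc, Complex.cpow_def_of_ne_zero htc,
          ← Complex.ofReal_log ht.le] at h
        exact h
      have hc : c = 0 := by
        by_contra hc
        have h := key (Real.exp (Real.pi / c)) (Real.exp_pos _)
        rw [Real.log_exp, Complex.exp_eq_exp_iff_exists_int] at h
        obtain ⟨n, hn⟩ := h
        have him := congrArg Complex.im hn
        simp [Complex.add_im, Complex.mul_im, Complex.ofReal_re, Complex.ofReal_im] at him
        rw [div_mul_cancel₀ _ hc] at him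
        have h2 : ((n:ℝ) * 2 - 1) * Real.pi = 0 := by linear_combination -him
        rcases mul_eq_zero.mp h2 with h3 | h3
        · have h4 : (n * 2 - 1 : ℤ) = 0 := by exact_mod_cast h3
          omega
        · exact Real.pi_ne_zero h3
      have hb : b = ((p + q : ℤ) : ℝ) := by
        have h := key (Real.exp 1) (Real.exp_pos 1)
        rw [Real.log_exp, Complex.exp_eq_exp_iff_exists_int] at h
        obtain ⟨n, hn⟩ := h
        have hre := congrArg Complex.re hn
        simpa [Complex.add_re, Complex.mul_re, hc] using hre
      refine ⟨hc, p + q, hb, ?_⟩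
      -- parity via g = I
      have hI := hpq Complex.I Complex.I_ne_zero
      have hIcpw : cpw b c v Complex.I = Complex.I ^ v := by
        unfold cpw
        rw [Complex.norm_I]
        push_cast
        rw [Complex.one_cpow, div_one, one_mul]
      rw [hIcpw, Complex.conj_I, show (-Complex.I) = Complex.I⁻¹ by
          rw [Complex.inv_I], inv_zpow, ← zpow_neg,
        ← zpow_add₀ Complex.I_ne_zero] at hI
      have hsq : ((-1 : ℂ)) ^ v = (-1 : ℂ) ^ (p + -q) := by
        have := congrArg (· ^ (2:ℤ)) hI
        simp only [← zpow_mul] at this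
        rw [mul_comm v 2, mul_comm (p + -q) 2, zpow_mul, zpow_mul] at this
        simpa [zpow_two, Complex.I_mul_I] using this
      rcases Int.even_or_odd (v - (p + -q)) with he | ho
      · obtain ⟨m, hm⟩ := he
        exact ⟨(q - m), by omega⟩
      · exfalso
        have : ((-1 : ℂ)) ^ (v - (p + -q)) = 1 := by
          rw [zpow_sub₀ (by norm_num : (-1:ℂ) ≠ 0), hsq]
          exact div_self (zpow_ne_zero _ (by norm_num))
        rw [ho.neg_one_zpow] at this
        norm_num at this
    · rintro ⟨hc, k, hb, hdvd⟩
      exact ⟨(k + v)/2, (k - v)/2, by rw [hc, hb]; exact part2 k v hdvd⟩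
  · intro k hc hb hdvd g hg
    rw [hc, hb]
    exact part2 k v hdvd g hg
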